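/- Let F_k(y,v) ∈ ℂ(y)[v] and define the derivation D on ℂ(y)[v] by D(p(y)) = θ_y p for p ∈ ℂ(y) (θ_y = y d/dy) and D(v) = −((κy − 2μ)/(y² + κy − μ)) v − ((λy − μ)/(y² + κy − μ)) − v², for constants κ, λ, μ with μ ≠ 0 such that y² + κy − μ has nonzero constant term −μ. Then D maps the subring R = ℂ(y)[v] ∩ (ℂ⟦y⟧ + w·ℂ((y))[w]) into the ideal I = ℂ(y)[v] ∩ (y ℂ⟦y⟧ + w·ℂ((y))[w]), where w = v − v₀ for any fixed power series v₀ ∈ ℂ⟦y⟧ satisfying D(v₀) = −((κy−2μ)/(y²+κy−μ)) v₀ − ((λy−μ)/(y²+κy−μ)) − v₀². -/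

import Mathlib

open Polynomial HahnSeries
open scoped RatFunc

noncomputable section

/-- The Euler operator `θ_y = y d/dy` on formal Laurent series. -/
def thetaL (f : LaurentSeries ℂ) : LaurentSeries ℂ where
  coeff n := (n : ℂ) * f.coeff n
  isPWO_support' := f.isPWO_support'.mono (by
    intro n hn
    simp only [Function.mem_support, ne_eq] at hn ⊢
    intro h
    exact hn (by rw [h, mul_zero]))

/-- The derivation `D` on `ℂ((y))[v]` determined by `D = θ_y` on coefficients and a
prescribed value `Dv` on the variable `v` (represented by `Polynomial.X`). -/
def Dpoly (Dv : Polynomial (LaurentSeries ℂ)) (p : Polynomial (LaurentSeries ℂ)) :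
    Polynomial (LaurentSeries ℂ) :=
  p.sum (fun k c => Polynomial.C (thetaL c) * Polynomial.X ^ k) +
    Polynomial.derivative p * Dv

lemma thetaL_coeff (f : LaurentSeries ℂ) (n : ℤ) : (thetaL f).coeff n = (n : ℂ) * f.coeff n := rfl

lemma thetaL_support (f : LaurentSeries ℂ) : (thetaL f).support ⊆ f.support := by
  intro n hn
  rw [HahnSeries.mem_support] at hn ⊢
  intro h
  exact hn (by rw [thetaL_coeff, h, mul_zero])

lemma thetaL_zero : thetaL 0 = 0 := by
  ext n; simp [thetaL_coeff]

lemma thetaL_add (f g : LaurentSeries ℂ) : thetaL (f + g) = thetaL f + thetaL g := by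
  ext n; simp [thetaL_coeff, mul_add]

lemma thetaL_sub (f g : LaurentSeries ℂ) : thetaL (f - g) = thetaL f - thetaL g := by
  ext n; simp [thetaL_coeff, mul_sub]

lemma thetaL_neg (f : LaurentSeries ℂ) : thetaL (-f) = -thetaL f := by
  ext n; simp [thetaL_coeff]

lemma thetaL_single (m : ℤ) (a : ℂ) :
    thetaL (HahnSeries.single m a) = HahnSeries.single m ((m : ℂ) * a) := by
  ext n
  rw [thetaL_coeff]
  by_cases h : n = m
  · simp [h]
  · simp [HahnSeries.coeff_single_of_ne h]

lemma thetaL_C (a : ℂ) : thetaL (HahnSeries.C a) = 0 := by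
  have := thetaL_single 0 a
  simpa using this

lemma thetaL_one : thetaL 1 = 0 := by simpa using thetaL_C 1

lemma thetaL_mul (f g : LaurentSeries ℂ) :
    thetaL (f * g) = thetaL f * g + f * thetaL g := by
  ext n
  rw [HahnSeries.coeff_add, thetaL_coeff, HahnSeries.coeff_mul,
    HahnSeries.coeff_mul_left' f.isPWO_support (thetaL_support f),
    HahnSeries.coeff_mul_right' g.isPWO_support (thetaL_support g),
    Finset.mul_sum, ← Finset.sum_add_distrib]
  refine Finset.sum_congr rfl fun ij hij => ?_
  rw [Finset.mem_addAntidiagonal] at hij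
  rw [thetaL_coeff, thetaL_coeff, ← hij.2.2]
  push_cast
  ring

/-- The subfield of rational Laurent series. -/
def ratSF : Subfield (LaurentSeries ℂ) := (@algebraMap (RatFunc ℂ) (LaurentSeries ℂ) _ _ (RatFunc.liftAlgebra ℂ (LaurentSeries ℂ))).fieldRange

lemma mem_ratSF_iff (x : LaurentSeries ℂ) :
    x ∈ ratSF ↔ x ∈ Set.range (@algebraMap (RatFunc ℂ) (LaurentSeries ℂ) _ _ (RatFunc.liftAlgebra ℂ (LaurentSeries ℂ))) := Iff.rfl

lemma thetaL_inv (f : LaurentSeries ℂ) (hf : f ≠ 0) :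
    thetaL f⁻¹ = -(f⁻¹ * thetaL f * f⁻¹) := by
  have h1 : f * f⁻¹ = 1 := mul_inv_cancel₀ hf
  have h2 := thetaL_mul f f⁻¹
  rw [h1, thetaL_one] at h2
  have h3 : f * thetaL f⁻¹ = -(thetaL f * f⁻¹) := by linear_combination -h2
  have h4 : thetaL f⁻¹ = f⁻¹ * (f * thetaL f⁻¹) := by
    rw [← mul_assoc, inv_mul_cancel₀ hf, one_mul]
  rw [h4, h3]
  ring

/-- Subfield of elements which are rational with rational theta. -/
def thetaSF : Subfield (LaurentSeries ℂ) where
  carrier := {f | f ∈ ratSF ∧ thetaL f ∈ ratSF}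
  zero_mem' := ⟨zero_mem _, by rw [thetaL_zero]; exact zero_mem _⟩
  one_mem' := ⟨one_mem _, by rw [thetaL_one]; exact zero_mem _⟩
  add_mem' := fun ha hb => ⟨add_mem ha.1 hb.1, by rw [thetaL_add]; exact add_mem ha.2 hb.2⟩
  mul_mem' := fun {a b} ha hb => ⟨mul_mem ha.1 hb.1, by
    rw [thetaL_mul]; exact add_mem (mul_mem ha.2 hb.1) (mul_mem ha.1 hb.2)⟩
  neg_mem' := fun {a} ha => ⟨neg_mem ha.1, by rw [thetaL_neg]; exact neg_mem ha.2⟩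
  inv_mem' := fun a ha => by
    by_cases h : a = 0
    · subst h
      rw [inv_zero]
      exact ⟨zero_mem _, by rw [thetaL_zero]; exact zero_mem _⟩
    · exact ⟨inv_mem ha.1, by
        rw [thetaL_inv a h]
        exact neg_mem (mul_mem (mul_mem (inv_mem ha.1) ha.2) (inv_mem ha.1))⟩

lemma coe_mem_thetaSF (q : RatFunc ℂ) : ((@algebraMap (RatFunc ℂ) (LaurentSeries ℂ) _ _ (RatFunc.liftAlgebra ℂ (LaurentSeries ℂ))) q) ∈ thetaSF := by
  have hC : ∀ a : ℂ, ((@algebraMap (RatFunc ℂ) (LaurentSeries ℂ) _ _ (RatFunc.liftAlgebra ℂ (LaurentSeries ℂ))) (RatFunc.C a)) ∈ thetaSF := by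
    intro a
    have : (@algebraMap (RatFunc ℂ) (LaurentSeries ℂ) _ _ (RatFunc.liftAlgebra ℂ (LaurentSeries ℂ))) (RatFunc.C a) = HahnSeries.C a := by
      rw [← RatFunc.algebraMap_C, ← IsScalarTower.algebraMap_apply]; simp
    rw [this]
    exact ⟨⟨RatFunc.C a, this⟩, by rw [thetaL_C]; exact zero_mem _⟩
  have hX : ((@algebraMap (RatFunc ℂ) (LaurentSeries ℂ) _ _ (RatFunc.liftAlgebra ℂ (LaurentSeries ℂ))) RatFunc.X) ∈ thetaSF := by
    have hx : (@algebraMap (RatFunc ℂ) (LaurentSeries ℂ) _ _ (RatFunc.liftAlgebra ℂ (LaurentSeries ℂ))) RatFunc.X = HahnSeries.single 1 1 := by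
      rw [RatFunc.coe_X]
    constructor
    · exact ⟨RatFunc.X, rfl⟩
    · rw [hx, thetaL_single]
      refine ⟨RatFunc.X, ?_⟩
      show (@algebraMap (RatFunc ℂ) (LaurentSeries ℂ) _ _ (RatFunc.liftAlgebra ℂ (LaurentSeries ℂ))) RatFunc.X = _
      rw [hx]
      norm_num
  have hpoly : ∀ P : Polynomial ℂ,
      ((@algebraMap (RatFunc ℂ) (LaurentSeries ℂ) _ _ (RatFunc.liftAlgebra ℂ (LaurentSeries ℂ))) (algebraMap (Polynomial ℂ) (RatFunc ℂ) P)) ∈ thetaSF := by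
    intro P
    induction P using Polynomial.induction_on with
    | C a => rw [RatFunc.algebraMap_C]; exact hC a
    | add p q hp hq => rw [map_add, map_add]; exact add_mem hp hq
    | monomial n a ih =>
      rw [map_mul, map_mul, map_pow, map_pow, RatFunc.algebraMap_C, RatFunc.algebraMap_X]
      exact mul_mem (hC a) (pow_mem hX _)
  induction q using RatFunc.induction_on with
  | f p q' hq' =>
    rw [map_div₀]
    exact div_mem (hpoly p) (hpoly q')

lemma thetaL_rat {x : LaurentSeries ℂ} (hx : x ∈ Set.range (@algebraMap (RatFunc ℂ) (LaurentSeries ℂ) _ _ (RatFunc.liftAlgebra ℂ (LaurentSeries ℂ)))) :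
    thetaL x ∈ Set.range (@algebraMap (RatFunc ℂ) (LaurentSeries ℂ) _ _ (RatFunc.liftAlgebra ℂ (LaurentSeries ℂ))) := by
  obtain ⟨q, rfl⟩ := hx
  exact (coe_mem_thetaSF q).2

/-- apply `thetaL` to every coefficient of a polynomial -/
def ThetaP (p : Polynomial (LaurentSeries ℂ)) : Polynomial (LaurentSeries ℂ) :=
  p.sum (fun k c => Polynomial.C (thetaL c) * Polynomial.X ^ k)

lemma ThetaP_coeff (p : Polynomial (LaurentSeries ℂ)) (k : ℕ) :
    (ThetaP p).coeff k = thetaL (p.coeff k) := by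
  rw [ThetaP, Polynomial.sum_def, Polynomial.finset_sum_coeff]
  simp only [Polynomial.coeff_C_mul, Polynomial.coeff_X_pow, mul_ite, mul_one, mul_zero]
  rw [Finset.sum_ite_eq p.support k (fun j => thetaL (p.coeff j))]
  by_cases h : k ∈ p.support
  · rw [if_pos h]
  · rw [if_neg h]
    rw [Polynomial.notMem_support_iff] at h
    rw [h, thetaL_zero]

lemma ThetaP_add (p q : Polynomial (LaurentSeries ℂ)) :
    ThetaP (p + q) = ThetaP p + ThetaP q := by
  ext k
  simp [ThetaP_coeff, Polynomial.coeff_add, thetaL_add]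

lemma ThetaP_sub (p q : Polynomial (LaurentSeries ℂ)) :
    ThetaP (p - q) = ThetaP p - ThetaP q := by
  ext k
  simp [ThetaP_coeff, Polynomial.coeff_sub, thetaL_sub]

lemma ThetaP_C (a : LaurentSeries ℂ) : ThetaP (Polynomial.C a) = Polynomial.C (thetaL a) := by
  ext k
  rw [ThetaP_coeff]
  rcases k with _ | k
  · simp
  · simp [thetaL_zero]

lemma ThetaP_X_mul (q : Polynomial (LaurentSeries ℂ)) :
    ThetaP (Polynomial.X * q) = Polynomial.X * ThetaP q := by
  ext k
  rcases k with _ | k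
  · simp [ThetaP_coeff, thetaL_zero]
  · simp [ThetaP_coeff, Polynomial.coeff_X_mul]

lemma ThetaP_C_mul (a : LaurentSeries ℂ) (q : Polynomial (LaurentSeries ℂ)) :
    ThetaP (Polynomial.C a * q) =
      Polynomial.C (thetaL a) * q + Polynomial.C a * ThetaP q := by
  ext k
  simp [ThetaP_coeff, Polynomial.coeff_C_mul, thetaL_mul]

/-- theta of a power series -/
lemma thetaL_ofPowerSeries (c : PowerSeries ℂ) :
    thetaL (HahnSeries.ofPowerSeries ℤ ℂ c) =
      HahnSeries.ofPowerSeries ℤ ℂ (PowerSeries.mk fun n => (n : ℂ) * PowerSeries.coeff n c) := by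
  ext n
  rw [thetaL_coeff]
  rcases n with m | m
  · rw [show (Int.ofNat m) = ((m : ℕ) : ℤ) from rfl]
    rw [HahnSeries.ofPowerSeries_apply_coeff, HahnSeries.ofPowerSeries_apply_coeff,
      PowerSeries.coeff_mk]
    push_cast
    ring
  · have hb : ∀ x : PowerSeries ℂ, (HahnSeries.ofPowerSeries ℤ ℂ x).coeff (Int.negSucc m) = 0 := by
      intro x
      rw [HahnSeries.ofPowerSeries_apply, HahnSeries.embDomain_notin_range]
      rintro ⟨a, ha⟩
      have ha' : (a : ℤ) = Int.negSucc m := ha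
      rw [Int.negSucc_eq] at ha'
      omega
    rw [hb, hb, mul_zero]

lemma Dpoly_eq (Dv p : Polynomial (LaurentSeries ℂ)) :
    Dpoly Dv p = ThetaP p + Polynomial.derivative p * Dv := rfl

/-- Let `D` be the derivation on `ℂ(y)[v]` with `D = θ_y` on `ℂ(y)` and
`D(v) = −((κy − 2μ)/(y² + κy − μ)) v − ((λy − μ)/(y² + κy − μ)) − v²`, where `μ ≠ 0`.
If `v₀ ∈ ℂ⟦y⟧` is a power series solution of the same Riccati equation, and
`w = v − v₀`, then `D` maps `R = ℂ(y)[v] ∩ (ℂ⟦y⟧ + w·ℂ((y))[w])` into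
`I = ℂ(y)[v] ∩ (y ℂ⟦y⟧ + w·ℂ((y))[w])`. Here `ℂ(y)[v]` is realized as the set of
polynomials (in `v`) whose coefficients are Laurent expansions of rational functions. -/
theorem derivation_maps_R_into_I (κ lam μ : ℂ) (hμ : μ ≠ 0)
    (y : LaurentSeries ℂ) (hy : y = HahnSeries.single 1 1)
    (u A B : LaurentSeries ℂ)
    (hu : u = y ^ 2 + HahnSeries.C κ * y - HahnSeries.C μ)
    (hA : A = (HahnSeries.C κ * y - 2 * HahnSeries.C μ) / u)
    (hB : B = (HahnSeries.C lam * y - HahnSeries.C μ) / u)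
    (Dv : Polynomial (LaurentSeries ℂ))
    (hDv : Dv = -(Polynomial.C A) * Polynomial.X - Polynomial.C B - Polynomial.X ^ 2)
    (v₀ : PowerSeries ℂ)
    (hv₀ : thetaL (HahnSeries.ofPowerSeries ℤ ℂ v₀) =
      -A * HahnSeries.ofPowerSeries ℤ ℂ v₀ - B - (HahnSeries.ofPowerSeries ℤ ℂ v₀) ^ 2)
    (w : Polynomial (LaurentSeries ℂ))
    (hw : w = Polynomial.X - Polynomial.C (HahnSeries.ofPowerSeries ℤ ℂ v₀))
    (p : Polynomial (LaurentSeries ℂ))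
    -- `p ∈ ℂ(y)[v]` : all coefficients are (Laurent expansions of) rational functions
    (hp_rat : ∀ k : ℕ, p.coeff k ∈ Set.range (@algebraMap (RatFunc ℂ) (LaurentSeries ℂ) _ _ (RatFunc.liftAlgebra ℂ (LaurentSeries ℂ))))
    -- `p ∈ ℂ⟦y⟧ + w·ℂ((y))[w]`
    (hp_R : ∃ c : PowerSeries ℂ, ∃ r : Polynomial (LaurentSeries ℂ),
      p = Polynomial.C (HahnSeries.ofPowerSeries ℤ ℂ c) + w * r) :
    (∀ k : ℕ, (Dpoly Dv p).coeff k ∈ Set.range (@algebraMap (RatFunc ℂ) (LaurentSeries ℂ) _ _ (RatFunc.liftAlgebra ℂ (LaurentSeries ℂ)))) ∧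
      ∃ c : PowerSeries ℂ, PowerSeries.constantCoeff c = 0 ∧
        ∃ r : Polynomial (LaurentSeries ℂ),
          Dpoly Dv p = Polynomial.C (HahnSeries.ofPowerSeries ℤ ℂ c) + w * r := by
  constructor
  · -- rationality of all coefficients
    have hCr : ∀ a : ℂ, HahnSeries.C a ∈ ratSF := by
      intro a
      refine ⟨RatFunc.C a, ?_⟩
      show (@algebraMap (RatFunc ℂ) (LaurentSeries ℂ) _ _ (RatFunc.liftAlgebra ℂ (LaurentSeries ℂ))) (RatFunc.C a) = HahnSeries.C a
      rw [← RatFunc.algebraMap_C, ← IsScalarTower.algebraMap_apply]; simp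
    have hyr : y ∈ ratSF := by
      refine ⟨RatFunc.X, ?_⟩
      show (@algebraMap (RatFunc ℂ) (LaurentSeries ℂ) _ _ (RatFunc.liftAlgebra ℂ (LaurentSeries ℂ))) RatFunc.X = y
      rw [RatFunc.coe_X, hy]
    have h2r : (2 : LaurentSeries ℂ) ∈ ratSF := by
      rw [← one_add_one_eq_two]; exact add_mem (one_mem _) (one_mem _)
    have hur : u ∈ ratSF := by
      rw [hu]
      exact sub_mem (add_mem (pow_mem hyr 2) (mul_mem (hCr κ) hyr)) (hCr μ)
    have hAr : A ∈ ratSF := by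
      rw [hA]
      exact div_mem (sub_mem (mul_mem (hCr κ) hyr) (mul_mem h2r (hCr μ))) hur
    have hBr : B ∈ ratSF := by
      rw [hB]
      exact div_mem (sub_mem (mul_mem (hCr lam) hyr) (hCr μ)) hur
    have hDvr : ∀ j : ℕ, Dv.coeff j ∈ ratSF := by
      intro j
      rw [hDv]
      rcases j with _ | _ | _ | j
      · simp only [Polynomial.coeff_sub, neg_mul, Polynomial.coeff_neg, Polynomial.coeff_C_mul,
          Polynomial.coeff_X_zero, Polynomial.coeff_C_zero, Polynomial.coeff_X_pow, mul_zero]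
        norm_num
        exact hBr
      · simp only [Polynomial.coeff_sub, neg_mul, Polynomial.coeff_neg, Polynomial.coeff_C_mul,
          Polynomial.coeff_X_one, Polynomial.coeff_C, Polynomial.coeff_X_pow, mul_one]
        norm_num
        exact hAr
      · simp only [Polynomial.coeff_sub, neg_mul, Polynomial.coeff_neg, Polynomial.coeff_C_mul,
          Polynomial.coeff_X, Polynomial.coeff_C, Polynomial.coeff_X_pow]
        norm_num
      · simp only [Polynomial.coeff_sub, neg_mul, Polynomial.coeff_neg, Polynomial.coeff_C_mul,
          Polynomial.coeff_X, Polynomial.coeff_C, Polynomial.coeff_X_pow]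
        norm_num
        exact zero_mem _
    intro k
    rw [Dpoly_eq, Polynomial.coeff_add, ThetaP_coeff]
    rw [← mem_ratSF_iff]
    refine add_mem ?_ ?_
    · rw [mem_ratSF_iff]
      exact thetaL_rat (hp_rat k)
    · rw [Polynomial.coeff_mul]
      refine sum_mem fun ij hij => ?_
      refine mul_mem ?_ (hDvr ij.2)
      rw [Polynomial.coeff_derivative]
      refine mul_mem ?_ ?_
      · rw [mem_ratSF_iff]; exact hp_rat _
      · exact add_mem (natCast_mem _ _) (one_mem _)
  · -- ideal membership
    obtain ⟨c, r, rfl⟩ := hp_R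
    set v0 : LaurentSeries ℂ := HahnSeries.ofPowerSeries ℤ ℂ v₀ with hv0def
    refine ⟨PowerSeries.mk fun n => (n : ℂ) * PowerSeries.coeff n c, by simp, ?_⟩
    refine ⟨ThetaP r + Polynomial.derivative r * Dv +
      r * (-(Polynomial.C A) - Polynomial.X - Polynomial.C v0), ?_⟩
    rw [Dpoly_eq, ← thetaL_ofPowerSeries]
    have hsplit : Polynomial.C (HahnSeries.ofPowerSeries ℤ ℂ c) + w * r =
        Polynomial.C (HahnSeries.ofPowerSeries ℤ ℂ c) +
          (Polynomial.X * r - Polynomial.C v0 * r) := by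
      rw [hw]; ring
    rw [hsplit, ThetaP_add, ThetaP_sub, ThetaP_C, ThetaP_X_mul, ThetaP_C_mul]
    have hder : Polynomial.derivative (Polynomial.C (HahnSeries.ofPowerSeries ℤ ℂ c) +
        (Polynomial.X * r - Polynomial.C v0 * r)) =
        r + (Polynomial.X - Polynomial.C v0) * Polynomial.derivative r := by
      simp [Polynomial.derivative_mul]
      ring
    rw [hder]
    have hkey : thetaL v0 = -A * v0 - B - v0 ^ 2 := hv₀
    rw [hkey]
    simp only [map_sub, map_neg, map_mul, map_pow]
    rw [hDv, hw]
    ring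

end
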